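/- Let $p$ be a prime and let $A$ be a finite abelian $p$-group that is not cyclic (equivalently, of rank at least $2$). Then the constant function $p$ lies in the transfer-function ideal $J(A) \subseteq \prod_{a \in A} \mathbb{Z}_p$; consequently the nonzero quotient ring $\left(\prod_{a \in A} \mathbb{Z}_p\right)/J(A)$ is an $\mathbb{F}_p$-algebra. -/

import Mathlib

open scoped Classical

/-- The class function of the transfer of `1` along a subgroup `A' ≤ A` in `p`-adic
`K`-theory: it takes the value `[A : A']` on elements of `A'` and `0` elsewhere. -/
noncomputable def transferFn (p : ℕ) [Fact p.Prime] {A : Type*} [AddCommGroup A]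
    (A' : AddSubgroup A) : A → ℤ_[p] :=
  fun a => if a ∈ A' then (A'.index : ℤ_[p]) else 0

/-- The transfer-function ideal `J(A) ⊆ ∏_{a ∈ A} ℤ_p`, generated by the transfer
functions of all proper subgroups of `A`. -/
noncomputable def transferIdeal (p : ℕ) [Fact p.Prime] (A : Type*) [AddCommGroup A] :
    Ideal (A → ℤ_[p]) :=
  Ideal.span {x | ∃ A' : AddSubgroup A, A' ≠ ⊤ ∧ x = transferFn p A'}

section Aux

variable (p : ℕ) [Fact p.Prime]

/-- A finite noncyclic abelian `p`-group surjects onto `(ℤ/p)²`. -/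
lemma exists_surjective_hom (A : Type*) [AddCommGroup A] [Finite A]
    (hA : IsPGroup p (Multiplicative A)) (hnc : ¬ IsAddCyclic A) :
    ∃ f : A →+ ZMod p × ZMod p, Function.Surjective f := by
  classical
  obtain ⟨ι, hι, n, hn, ⟨e⟩⟩ := AddCommGroup.equiv_directSum_zmod_of_finite' A
  haveI := hι
  obtain ⟨k, hk⟩ := IsPGroup.iff_card.mp hA
  have hcardA : Nat.card A = p ^ k := hk
  have hdvd : ∀ i, p ∣ n i := by
    intro i
    have h1 : Nat.card (ZMod (n i)) ∣ Nat.card A :=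
      AddSubgroup.card_dvd_of_injective
        (e.symm.toAddMonoidHom.comp (DirectSum.of (fun i => ZMod (n i)) i))
        (e.symm.injective.comp (DirectSum.of_injective i))
    rw [Nat.card_zmod, hcardA] at h1
    obtain ⟨m, hm, hem⟩ := (Nat.dvd_prime_pow Fact.out).mp h1
    rw [hem]
    refine dvd_pow_self p ?_
    rintro rfl
    have := hn i
    rw [hem] at this
    simpa using this
  by_cases hij : ∃ i j : ι, i ≠ j
  swap
  · exfalso
    apply hnc
    push_neg at hij
    haveI : Subsingleton ι := ⟨hij⟩
    rcases isEmpty_or_nonempty ι with h | h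
    · haveI : Subsingleton (DirectSum ι fun i => ZMod (n i)) := by
        haveI : ∀ i : ι, Subsingleton (ZMod (n i)) := fun i => isEmptyElim i
        infer_instance
      haveI : Subsingleton A := e.toEquiv.subsingleton
      infer_instance
    · haveI : Unique ι := ⟨⟨Classical.arbitrary ι⟩, fun i => hij i _⟩
      have hs : Function.Surjective
          (e.symm.toAddMonoidHom.comp (DirectSum.of (fun i => ZMod (n i)) default)) := by
        intro a
        refine ⟨e a default, ?_⟩
        have : DirectSum.of (fun i => ZMod (n i)) default (e a default) = e a := by
          refine DFinsupp.ext fun i => ?_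
          rw [Unique.eq_default i]
          exact DirectSum.of_eq_same _ _
        simp only [AddMonoidHom.comp_apply, AddEquiv.coe_toAddMonoidHom, this]
        exact e.symm_apply_apply a
      exact isAddCyclic_of_surjective _ hs
  obtain ⟨i, j, hij⟩ := hij
  refine ⟨AddMonoidHom.prod
      (((ZMod.castHom (hdvd i) (ZMod p)).toAddMonoidHom.comp
        (DFinsupp.evalAddMonoidHom i)).comp e.toAddMonoidHom)
      (((ZMod.castHom (hdvd j) (ZMod p)).toAddMonoidHom.comp
        (DFinsupp.evalAddMonoidHom j)).comp e.toAddMonoidHom), ?_⟩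
  rintro ⟨x, y⟩
  set S := DirectSum.of (fun i => ZMod (n i)) i ((x.val : ZMod (n i)))
    + DirectSum.of (fun i => ZMod (n i)) j ((y.val : ZMod (n j))) with hS
  refine ⟨e.symm S, ?_⟩
  have hei : e (e.symm S) = S := e.apply_symm_apply S
  have hxi : S i = (x.val : ZMod (n i)) := by
    rw [hS, DirectSum.add_apply, DirectSum.of_eq_same, DirectSum.of_eq_of_ne j i _ hij,
      add_zero]
  have hyj : S j = (y.val : ZMod (n j)) := by
    rw [hS, DirectSum.add_apply, DirectSum.of_eq_same, DirectSum.of_eq_of_ne i j _ hij.symm,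
      zero_add]
  ext
  · show ZMod.castHom (hdvd i) (ZMod p) ((e (e.symm S)) i) = x
    rw [hei, hxi, map_natCast]
    exact ZMod.natCast_rightInverse x
  · show ZMod.castHom (hdvd j) (ZMod p) ((e (e.symm S)) j) = y
    rw [hei, hyj, map_natCast]
    exact ZMod.natCast_rightInverse y

variable {A : Type*} [AddCommGroup A]

lemma transferFn_comap {V : Type*} [AddCommGroup V] (f : A →+ V)
    (hf : Function.Surjective f) (L : AddSubgroup V) :
    transferFn p (L.comap f) = fun a => if f a ∈ L then (L.index : ℤ_[p]) else 0 := by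
  funext a
  simp [transferFn, AddSubgroup.mem_comap, AddSubgroup.index_comap_of_surjective L hf]

lemma mem_span_line {c : ZMod p} {v : ZMod p × ZMod p} :
    v ∈ AddSubgroup.zmultiples ((1 : ZMod p), c) ↔ v.2 = v.1 * c := by
  haveI : NeZero p := ⟨(Fact.out : p.Prime).ne_zero⟩
  constructor
  · rintro ⟨k, rfl⟩
    simp [Prod.smul_def, zsmul_eq_mul]
  · intro h
    refine ⟨(v.1.val : ℤ), ?_⟩
    have h1 : ((v.1.val : ℤ) : ZMod p) = v.1 := by
      push_cast
      simp [ZMod.natCast_val, ZMod.cast_id]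
    ext
    · simpa [Prod.smul_def, zsmul_eq_mul] using h1
    · simpa [Prod.smul_def, zsmul_eq_mul, h1] using h.symm

lemma mem_span_inf {v : ZMod p × ZMod p} :
    v ∈ AddSubgroup.zmultiples ((0 : ZMod p), (1 : ZMod p)) ↔ v.1 = 0 := by
  haveI : NeZero p := ⟨(Fact.out : p.Prime).ne_zero⟩
  constructor
  · rintro ⟨k, rfl⟩
    simp [Prod.smul_def]
  · intro h
    refine ⟨(v.2.val : ℤ), ?_⟩
    have h1 : ((v.2.val : ℤ) : ZMod p) = v.2 := by
      push_cast
      simp [ZMod.natCast_val, ZMod.cast_id]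
    ext
    · simpa [Prod.smul_def] using h.symm
    · simpa [Prod.smul_def, zsmul_eq_mul] using h1

lemma index_zmultiples_of_orderOf (w : ZMod p × ZMod p) (hw : addOrderOf w = p) :
    (AddSubgroup.zmultiples w).index = p := by
  haveI : NeZero p := ⟨(Fact.out : p.Prime).ne_zero⟩
  have h1 := AddSubgroup.index_mul_card (AddSubgroup.zmultiples w)
  rw [Nat.card_zmultiples, hw] at h1
  rw [show Nat.card (ZMod p × ZMod p) = p * p by
    rw [Nat.card_prod, Nat.card_zmod]] at h1
  exact Nat.eq_of_mul_eq_mul_right (Fact.out : p.Prime).pos h1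

lemma orderOf_line (c : ZMod p) : addOrderOf ((1 : ZMod p), c) = p := by
  haveI : NeZero p := ⟨(Fact.out : p.Prime).ne_zero⟩
  rw [Prod.addOrderOf, ZMod.addOrderOf_one]
  refine Nat.dvd_antisymm (Nat.lcm_dvd dvd_rfl ?_) (Nat.dvd_lcm_left _ _)
  simpa [Nat.card_zmod] using addOrderOf_dvd_natCard c

lemma orderOf_inf : addOrderOf ((0 : ZMod p), (1 : ZMod p)) = p := by
  haveI : NeZero p := ⟨(Fact.out : p.Prime).ne_zero⟩
  rw [Prod.addOrderOf, ZMod.addOrderOf_one, addOrderOf_zero, Nat.lcm_one_left]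

end Aux

theorem p_mem_transfer_ideal_of_not_cyclic (p : ℕ) [Fact p.Prime]
    (A : Type*) [AddCommGroup A] [Finite A] (hA : IsPGroup p (Multiplicative A))
    (hnc : ¬ IsAddCyclic A) :
    (p : A → ℤ_[p]) ∈ transferIdeal p A ∧
      Nontrivial ((A → ℤ_[p]) ⧸ transferIdeal p A) ∧
      (p : (A → ℤ_[p]) ⧸ transferIdeal p A) = 0 := by
  haveI : NeZero p := ⟨(Fact.out : p.Prime).ne_zero⟩
  have hp : p.Prime := Fact.out
  obtain ⟨f, hf⟩ := exists_surjective_hom p A hA hnc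
  set V := ZMod p × ZMod p
  set L : ZMod p → AddSubgroup V := fun c => AddSubgroup.zmultiples ((1 : ZMod p), c) with hL
  set Li : AddSubgroup V := AddSubgroup.zmultiples ((0 : ZMod p), (1 : ZMod p)) with hLi
  have hLidx : ∀ c, (L c).index = p := fun c =>
    index_zmultiples_of_orderOf p _ (orderOf_line p c)
  have hLiidx : Li.index = p := index_zmultiples_of_orderOf p _ (orderOf_inf p)
  have hbotidx : (⊥ : AddSubgroup V).index = p * p := by
    rw [AddSubgroup.index_bot, Nat.card_prod, Nat.card_zmod]
  -- the fundamental identity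
  have key : (p : A → ℤ_[p]) =
      (∑ c : ZMod p, transferFn p ((L c).comap f)) + transferFn p (Li.comap f)
        - transferFn p ((⊥ : AddSubgroup V).comap f) := by
    funext a
    have hLc : ∀ c, transferFn p ((L c).comap f) a
        = if (f a).2 = (f a).1 * c then ((p : ℕ) : ℤ_[p]) else 0 := by
      intro c
      rw [transferFn_comap p f hf]
      simp only [hLidx]
      congr 1
      · exact propext (mem_span_line p)
    have hLci : transferFn p (Li.comap f) a
        = if (f a).1 = 0 then ((p : ℕ) : ℤ_[p]) else 0 := by
      rw [transferFn_comap p f hf]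
      simp only [hLiidx]
      congr 1
      exact propext (mem_span_inf p)
    have hbot : transferFn p ((⊥ : AddSubgroup V).comap f) a
        = if (f a).1 = 0 ∧ (f a).2 = 0 then ((p * p : ℕ) : ℤ_[p]) else 0 := by
      rw [transferFn_comap p f hf]
      simp only [hbotidx]
      congr 1
      rw [AddSubgroup.mem_bot, Prod.ext_iff]
      rfl
    simp only [Pi.natCast_apply, Pi.add_apply, Pi.sub_apply, Finset.sum_apply, hLc, hLci, hbot]
    by_cases h1 : (f a).1 = 0
    · by_cases h2 : (f a).2 = 0
      · simp only [h1, h2, zero_mul, eq_self_iff_true, if_true, and_self,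
          Finset.sum_const, Finset.card_univ, ZMod.card, nsmul_eq_mul]
        push_cast
        ring
      · simp [h1, h2]
    · have hcond : ∀ c : ZMod p, ((f a).2 = (f a).1 * c) ↔ (c = ((f a).1)⁻¹ * (f a).2) := by
        intro c
        constructor
        · intro h; rw [h, inv_mul_cancel_left₀ h1]
        · intro h; rw [h, mul_inv_cancel_left₀ h1]
      have hsum : (∑ c : ZMod p, if (f a).2 = (f a).1 * c then ((p : ℕ) : ℤ_[p]) else 0)
          = ((p : ℕ) : ℤ_[p]) := by
        calc (∑ c : ZMod p, if (f a).2 = (f a).1 * c then ((p : ℕ) : ℤ_[p]) else 0)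
            = ∑ c : ZMod p, if c = ((f a).1)⁻¹ * (f a).2 then ((p : ℕ) : ℤ_[p]) else 0 := by
              refine Finset.sum_congr rfl fun c _ => ?_
              rw [if_congr (hcond c) rfl rfl]
          _ = _ := by
              rw [Finset.sum_ite_eq' Finset.univ (((f a).1)⁻¹ * (f a).2)
                (fun _ => ((p : ℕ) : ℤ_[p]))]
              simp
      rw [hsum, if_neg h1, if_neg (by simp [h1])]
      push_cast
      ring
  -- properness of the subgroups used
  have hproper : ∀ M : AddSubgroup V, M.index = p ∨ M.index = p * p → M.comap f ≠ ⊤ := by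
    intro M hM htop
    have h1 : (M.comap f).index = 1 := AddSubgroup.index_eq_one.mpr htop
    rw [AddSubgroup.index_comap_of_surjective M hf] at h1
    rcases hM with h | h <;> rw [h1] at h
    · exact hp.one_lt.ne h
    · exact (Nat.one_lt_mul_iff.mpr ⟨hp.pos, hp.pos, Or.inl hp.one_lt⟩).ne' h.symm
  have hmem : (p : A → ℤ_[p]) ∈ transferIdeal p A := by
    rw [key]
    refine Ideal.sub_mem _ (Ideal.add_mem _ ?_ ?_) ?_
    · exact Ideal.sum_mem _ fun c _ => Ideal.subset_span
        ⟨(L c).comap f, hproper _ (Or.inl (hLidx c)), rfl⟩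
    · exact Ideal.subset_span ⟨Li.comap f, hproper _ (Or.inl hLiidx), rfl⟩
    · exact Ideal.subset_span ⟨(⊥ : AddSubgroup V).comap f, hproper _ (Or.inr hbotidx), rfl⟩
  -- every generator is divisible by p at the point 0, so the ideal is proper
  have hne : transferIdeal p A ≠ ⊤ := by
    intro htop
    have hle : transferIdeal p A ≤
        (Ideal.span {(p : ℤ_[p])}).comap (Pi.evalRingHom (fun _ : A => ℤ_[p]) 0) := by
      rw [transferIdeal, Ideal.span_le]
      rintro x ⟨A', hA', rfl⟩
      obtain ⟨k, hk⟩ := IsPGroup.iff_card.mp hA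
      have hidvd : A'.index ∣ p ^ k := hk ▸ AddSubgroup.index_dvd_card A'
      obtain ⟨m, hm, hem⟩ := (Nat.dvd_prime_pow hp).mp hidvd
      have hm0 : m ≠ 0 := by
        rintro rfl
        exact hA' (AddSubgroup.index_eq_one.mp (by simpa using hem))
      have hpdvd : p ∣ A'.index := hem ▸ dvd_pow_self p hm0
      rw [SetLike.mem_coe, Ideal.mem_comap, Ideal.mem_span_singleton]
      show (p : ℤ_[p]) ∣ (if (0 : A) ∈ A' then (A'.index : ℤ_[p]) else 0)
      rw [if_pos A'.zero_mem]
      exact_mod_cast Nat.cast_dvd_cast (α := ℤ_[p]) hpdvd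
    have h1 : (1 : A → ℤ_[p]) ∈ transferIdeal p A := htop ▸ Submodule.mem_top
    have h2 := hle h1
    simp only [Ideal.mem_comap, Pi.evalRingHom_apply, Pi.one_apply,
      Ideal.mem_span_singleton] at h2
    exact PadicInt.irreducible_p.not_isUnit (isUnit_of_dvd_one h2)
  refine ⟨hmem, Ideal.Quotient.nontrivial_iff.mpr hne, ?_⟩
  rw [show ((p : (A → ℤ_[p]) ⧸ transferIdeal p A)) =
      Ideal.Quotient.mk (transferIdeal p A) (p : A → ℤ_[p]) by push_cast; rfl]
  exact Ideal.Quotient.eq_zero_iff_mem.mpr hmem
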